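/- Let x₀, x₁, x₂, x₃ be points in the Euclidean plane ℝ², and for t ∈ ℝ let T(t) denote the triangle with vertices x₁, x₂, and x₃ + t·(x₂ − x₁), i.e., the convex hull of {x₁, x₂, x₃ + t·(x₂ − x₁)}. Then the function g(t) = ∫_{T(t)} ‖x − x₀‖ dx is convex in t. -/

import Mathlib

open MeasureTheory Real

namespace ShearedTriangleAux

noncomputable def mat (e f : EuclideanSpace ℝ (Fin 2)) (t : ℝ) : Matrix (Fin 2) (Fin 2) ℝ :=
  !![e 0, t * e 0 + f 0; e 1, t * e 1 + f 1]

noncomputable def lmap (e f : EuclideanSpace ℝ (Fin 2)) (t : ℝ) :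
    EuclideanSpace ℝ (Fin 2) →ₗ[ℝ] EuclideanSpace ℝ (Fin 2) :=
  Matrix.toEuclideanLin (mat e f t)

lemma det_mat (e f : EuclideanSpace ℝ (Fin 2)) (t : ℝ) :
    (mat e f t).det = e 0 * f 1 - f 0 * e 1 := by
  simp [mat, Matrix.det_fin_two]; ring

lemma det_lmap (e f : EuclideanSpace ℝ (Fin 2)) (t : ℝ) :
    LinearMap.det (lmap e f t) = e 0 * f 1 - f 0 * e 1 := by
  rw [lmap, Matrix.toEuclideanLin_eq_toLin, LinearMap.det_toLin, det_mat]

noncomputable def u0 : EuclideanSpace ℝ (Fin 2) := (WithLp.equiv 2 (Fin 2 → ℝ)).symm ![1, 0]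
noncomputable def u1 : EuclideanSpace ℝ (Fin 2) := (WithLp.equiv 2 (Fin 2 → ℝ)).symm ![0, 1]

lemma lmap_u0 (e f : EuclideanSpace ℝ (Fin 2)) (t : ℝ) : lmap e f t u0 = e := by
  ext i
  fin_cases i <;>
    simp [lmap, u0, mat, Matrix.toEuclideanLin_apply_piLp_toLp, Matrix.mulVec,
      dotProduct, Fin.sum_univ_two]

lemma lmap_u1 (e f : EuclideanSpace ℝ (Fin 2)) (t : ℝ) : lmap e f t u1 = f + t • e := by
  ext i
  fin_cases i <;>
    simp [lmap, u1, mat, Matrix.toEuclideanLin_apply_piLp_toLp, Matrix.mulVec,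
      dotProduct, Fin.sum_univ_two] <;> ring

lemma mat_combo (e f : EuclideanSpace ℝ (Fin 2)) {a b : ℝ} (t₁ t₂ : ℝ) (hab : a + b = 1) :
    mat e f (a * t₁ + b * t₂) = a • mat e f t₁ + b • mat e f t₂ := by
  have hb : b = 1 - a := by linarith
  subst hb
  ext i j
  fin_cases i <;> fin_cases j <;> simp [mat] <;> ring

end ShearedTriangleAux

namespace ShearedTriangleAux

noncomputable def aff (x₁ e f : EuclideanSpace ℝ (Fin 2)) (t : ℝ) :
    EuclideanSpace ℝ (Fin 2) →ᵃ[ℝ] EuclideanSpace ℝ (Fin 2) where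
  toFun := fun y => x₁ + lmap e f t y
  linear := lmap e f t
  map_vadd' := by
    intro p v
    simp only [map_add, vadd_eq_add]
    abel

lemma aff_apply (x₁ e f : EuclideanSpace ℝ (Fin 2)) (t : ℝ) (y : EuclideanSpace ℝ (Fin 2)) :
    aff x₁ e f t y = x₁ + lmap e f t y := rfl

noncomputable def S : Set (EuclideanSpace ℝ (Fin 2)) := convexHull ℝ {0, u0, u1}

lemma S_compact : IsCompact S := (Set.toFinite _).isCompact_convexHull ℝ

lemma S_meas : MeasurableSet S := S_compact.isClosed.measurableSet

lemma image_aff (x₁ x₂ x₃ : EuclideanSpace ℝ (Fin 2)) (t : ℝ) :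
    convexHull ℝ {x₁, x₂, x₃ + t • (x₂ - x₁)} = aff x₁ (x₂ - x₁) (x₃ - x₁) t '' S := by
  rw [S, AffineMap.image_convexHull]
  congr 1
  rw [Set.image_insert_eq, Set.image_insert_eq, Set.image_singleton]
  simp only [aff_apply, map_zero, lmap_u0, lmap_u1]
  congr 1
  · abel
  congr 1
  · abel
  · congr 1; abel

end ShearedTriangleAux

namespace ShearedTriangleAux

lemma lmap_injective (e f : EuclideanSpace ℝ (Fin 2)) (t : ℝ)
    (hD : e 0 * f 1 - f 0 * e 1 ≠ 0) : Function.Injective (lmap e f t) := by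
  have hA : IsUnit (mat e f t).det := by rw [det_mat]; exact isUnit_iff_ne_zero.mpr hD
  have h := Matrix.ker_toLin_eq_bot (PiLp.basisFun 2 ℝ (Fin 2)) (mat e f t) hA
  rw [← Matrix.toEuclideanLin_eq_toLin] at h
  exact LinearMap.ker_eq_bot.mp h

lemma change (x₀ x₁ e f : EuclideanSpace ℝ (Fin 2)) (t : ℝ)
    (hD : e 0 * f 1 - f 0 * e 1 ≠ 0) :
    ∫ x in aff x₁ e f t '' S, ‖x - x₀‖ ∂volume
      = |e 0 * f 1 - f 0 * e 1| * ∫ y in S, ‖x₁ + lmap e f t y - x₀‖ ∂volume := by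
  have hInjOn : Set.InjOn (aff x₁ e f t) S := by
    have : Function.Injective (aff x₁ e f t) := by
      intro y z h
      exact lmap_injective e f t hD (by simpa [aff_apply] using h)
    exact this.injOn
  have hderiv : ∀ y ∈ S, HasFDerivWithinAt (aff x₁ e f t)
      (LinearMap.toContinuousLinearMap (lmap e f t)) S y := by
    intro y _
    exact (((LinearMap.toContinuousLinearMap (lmap e f t)).hasFDerivAt).const_add
      x₁).hasFDerivWithinAt
  rw [integral_image_eq_integral_abs_det_fderiv_smul volume S_meas hderiv hInjOn
    (fun x => ‖x - x₀‖)]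
  have hdet : (LinearMap.toContinuousLinearMap (lmap e f t)).det
      = e 0 * f 1 - f 0 * e 1 := by
    rw [ContinuousLinearMap.det, LinearMap.coe_toContinuousLinearMap, det_lmap]
  simp only [hdet, aff_apply]
  rw [integral_smul, smul_eq_mul]

end ShearedTriangleAux

namespace ShearedTriangleAux

lemma integrable_aux (x₀ x₁ e f : EuclideanSpace ℝ (Fin 2)) (t : ℝ) :
    IntegrableOn (fun y => ‖x₁ + lmap e f t y - x₀‖) S volume := by
  have hc : Continuous fun y => ‖x₁ + lmap e f t y - x₀‖ := by
    have : Continuous (lmap e f t) := (lmap e f t).continuous_of_finiteDimensional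
    exact ((continuous_const.add this).sub continuous_const).norm
  exact hc.continuousOn.integrableOn_compact S_compact

lemma h_convex (x₀ x₁ e f : EuclideanSpace ℝ (Fin 2)) :
    ConvexOn ℝ Set.univ (fun t => ∫ y in S, ‖x₁ + lmap e f t y - x₀‖ ∂volume) := by
  refine ⟨convex_univ, fun t₁ _ t₂ _ a b ha hb hab => ?_⟩
  have hkey : ∀ y : EuclideanSpace ℝ (Fin 2),
      x₁ + lmap e f (a * t₁ + b * t₂) y - x₀
        = a • (x₁ + lmap e f t₁ y - x₀) + b • (x₁ + lmap e f t₂ y - x₀) := by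
    intro y
    have hb' : b = 1 - a := by linarith
    subst hb'
    simp only [lmap, mat_combo e f t₁ t₂ hab, map_add, _root_.map_smul, LinearMap.add_apply,
      LinearMap.smul_apply]
    module
  have hle : ∀ y : EuclideanSpace ℝ (Fin 2),
      ‖x₁ + lmap e f (a * t₁ + b * t₂) y - x₀‖
        ≤ a * ‖x₁ + lmap e f t₁ y - x₀‖ + b * ‖x₁ + lmap e f t₂ y - x₀‖ := by
    intro y
    rw [hkey y]
    refine (norm_add_le _ _).trans ?_
    rw [norm_smul, norm_smul, Real.norm_eq_abs, Real.norm_eq_abs, abs_of_nonneg ha,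
      abs_of_nonneg hb]
  have h1 := integrable_aux x₀ x₁ e f t₁
  have h2 := integrable_aux x₀ x₁ e f t₂
  calc ∫ y in S, ‖x₁ + lmap e f (a • t₁ + b • t₂) y - x₀‖ ∂volume
      ≤ ∫ y in S, (a * ‖x₁ + lmap e f t₁ y - x₀‖ + b * ‖x₁ + lmap e f t₂ y - x₀‖) ∂volume := by
        refine integral_mono (by simpa [smul_eq_mul, IntegrableOn] using integrable_aux x₀ x₁ e f (a • t₁ + b • t₂)) ?_ ?_
        · exact (h1.const_mul a).add (h2.const_mul b)
        · intro y
          simpa [smul_eq_mul] using hle y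
    _ = a • (∫ y in S, ‖x₁ + lmap e f t₁ y - x₀‖ ∂volume)
          + b • (∫ y in S, ‖x₁ + lmap e f t₂ y - x₀‖ ∂volume) := by
        rw [integral_add (h1.const_mul a) (h2.const_mul b), integral_const_mul,
          integral_const_mul, smul_eq_mul, smul_eq_mul]

end ShearedTriangleAux

namespace ShearedTriangleAux

lemma degenerate (x₁ x₂ x₃ : EuclideanSpace ℝ (Fin 2))
    (hD : (x₂ - x₁) 0 * (x₃ - x₁) 1 - (x₃ - x₁) 0 * (x₂ - x₁) 1 = 0) (t : ℝ) :
    volume (convexHull ℝ {x₁, x₂, x₃ + t • (x₂ - x₁)}) = 0 := by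
  set e := x₂ - x₁ with he
  set f := x₃ - x₁ with hf
  have hdet : LinearMap.det (lmap e f 0) = 0 := by rw [det_lmap]; exact hD
  have hrange := LinearMap.range_lt_top_of_det_eq_zero hdet
  set Q : AffineSubspace ℝ (EuclideanSpace ℝ (Fin 2)) :=
    AffineSubspace.mk' x₁ (LinearMap.range (lmap e f 0)) with hQdef
  have hQ : Q ≠ ⊤ := by
    intro h
    have h2 : Q.direction = ⊤ := by rw [h, AffineSubspace.direction_top]
    rw [hQdef, AffineSubspace.direction_mk'] at h2
    exact hrange.ne h2
  have hsub : convexHull ℝ {x₁, x₂, x₃ + t • (x₂ - x₁)} ⊆ (Q : Set (EuclideanSpace ℝ (Fin 2))) := by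
    refine convexHull_min ?_ Q.convex
    intro x hx
    simp only [Set.mem_insert_iff, Set.mem_singleton_iff] at hx
    rcases hx with rfl | rfl | rfl
    · exact AffineSubspace.self_mem_mk' _ _
    · rw [SetLike.mem_coe, hQdef, AffineSubspace.mem_mk']
      exact ⟨u0, by rw [lmap_u0]; simp [he, vsub_eq_sub]⟩
    · rw [SetLike.mem_coe, hQdef, AffineSubspace.mem_mk']
      refine ⟨u1 + t • u0, ?_⟩
      rw [map_add, _root_.map_smul, lmap_u0, lmap_u1]
      rw [vsub_eq_sub, hf, he]
      module
  exact measure_mono_null hsub (Measure.addHaar_affineSubspace volume Q hQ)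

end ShearedTriangleAux

open ShearedTriangleAux in
theorem sheared_triangle_fermat_weber_convex
    (x₀ x₁ x₂ x₃ : EuclideanSpace ℝ (Fin 2)) :
    ConvexOn ℝ Set.univ
      (fun t : ℝ =>
        ∫ x in convexHull ℝ {x₁, x₂, x₃ + t • (x₂ - x₁)}, ‖x - x₀‖ ∂volume) := by
  by_cases hD : (x₂ - x₁) 0 * (x₃ - x₁) 1 - (x₃ - x₁) 0 * (x₂ - x₁) 1 = 0
  · have hz : (fun t : ℝ =>
        ∫ x in convexHull ℝ {x₁, x₂, x₃ + t • (x₂ - x₁)}, ‖x - x₀‖ ∂volume)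
        = fun _ => (0 : ℝ) := by
      funext t
      rw [Measure.restrict_eq_zero.mpr (degenerate x₁ x₂ x₃ hD t), integral_zero_measure]
    rw [hz]
    exact convexOn_const 0 convex_univ
  · have hz : (fun t : ℝ =>
        ∫ x in convexHull ℝ {x₁, x₂, x₃ + t • (x₂ - x₁)}, ‖x - x₀‖ ∂volume)
        = fun t : ℝ => |(x₂ - x₁) 0 * (x₃ - x₁) 1 - (x₃ - x₁) 0 * (x₂ - x₁) 1| *
            ∫ y in S, ‖x₁ + lmap (x₂ - x₁) (x₃ - x₁) t y - x₀‖ ∂volume := by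
      funext t
      rw [image_aff x₁ x₂ x₃ t, change x₀ x₁ (x₂ - x₁) (x₃ - x₁) t hD]
    rw [hz]
    have := (h_convex x₀ x₁ (x₂ - x₁) (x₃ - x₁)).smul
      (abs_nonneg ((x₂ - x₁) 0 * (x₃ - x₁) 1 - (x₃ - x₁) 0 * (x₂ - x₁) 1))
    simpa [smul_eq_mul] using this
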